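/- Let $(S_j)_{j=1}^t$ be pairwise disjoint finite sets of primes with $|S_j|=n_j\geq 3$, and for each $j$ let $\Lambda_j, \Lambda_j'$ be the corresponding subgroups of $\mathbb{Q}^\times\times\mathbb{Q}^\times$ from the wild construction. Set $\Gamma_t = \Lambda_1\cdots\Lambda_t$ and $\Gamma_t'=\Lambda_1'\cdots\Lambda_t'$. Then $\Gamma_t\cap\Gamma_t' = (\Lambda_1\cap\Lambda_1')\cdots(\Lambda_t\cap\Lambda_t')$ and $\mathrm{rk}_\mathbb{Z}\,\Gamma_t/(\Gamma_t\cap\Gamma_t') = t$. -/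

import Mathlib

/-- The generators `λ₁ = (u 0, 1)`, `λ_{j+1} = (u j, u (j-1))` for `1 ≤ j ≤ n`,
`λ_{n+2} = (1, u (n))` (indices 0-based, family `u` of size `n+1`). -/
def wildGens {G : Type*} [Group G] {n : ℕ} (u : Fin (n + 1) → G) :
    Fin (n + 2) → G × G := fun j =>
  (if h : (j : ℕ) < n + 1 then u ⟨j, h⟩ else 1,
   if h : 0 < (j : ℕ) then u ⟨(j : ℕ) - 1, by have := j.isLt; omega⟩ else 1)

private lemma padicValRat_prime_prime {p m : ℕ} (hp : p.Prime) (hm : m.Prime) :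
    padicValRat p (m : ℚ) = if p = m then 1 else 0 := by
  have h : ((m : ℤ) : ℚ) = (m : ℚ) := by push_cast; ring
  rw [← h, padicValRat.of_int, padicValInt.of_nat]
  split_ifs with hpm
  · subst hpm; rw [padicValNat.self hp.one_lt]; norm_num
  · rw [padicValNat.eq_zero_of_not_dvd]
    · norm_num
    · intro hdvd
      exact hpm ((Nat.prime_dvd_prime_iff_eq hp hm).mp hdvd)

theorem wild_families_inf_and_rank (t : ℕ) (nf : Fin t → ℕ)
    (q : (j : Fin t) → Fin (nf j + 3) → ℕ)
    (hq : ∀ j i, (q j i).Prime)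
    (hinj : Function.Injective
      (fun x : (j : Fin t) × Fin (nf j + 3) => q x.1 x.2))
    (N N' : Fin t → ℕ) (hN : ∀ j, 1 ≤ N j) (hN' : ∀ j, 1 ≤ N' j)
    (u : (j : Fin t) → Fin (nf j + 3) → ℚˣ)
    (hu : ∀ j i, (u j i : ℚ) = (q j i : ℚ))
    (Λ Λ' : Fin t → Subgroup (ℚˣ × ℚˣ))
    (hΛ : ∀ j, Λ j = Subgroup.closure
        (insert ((1 : ℚˣ), (u j 0) ^ (N j)) (Set.range (wildGens (u j)))))
    (hΛ' : ∀ j, Λ' j = Subgroup.closure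
        (insert ((u j (Fin.last (nf j + 2))) ^ (N' j), (1 : ℚˣ))
          (Set.range (wildGens (u j))))) :
    (⨆ j, Λ j) ⊓ (⨆ j, Λ' j) = ⨆ j, (Λ j ⊓ Λ' j) ∧
    Module.rank ℤ (Additive
        (↥(⨆ j, Λ j) ⧸ (((⨆ j, Λ j) ⊓ (⨆ j, Λ' j)).subgroupOf (⨆ j, Λ j))))
      = (t : Cardinal) := by
  classical
  have fprime : ∀ j i, Fact (q j i).Prime := fun j i => ⟨hq j i⟩
  -- the valuation homomorphism
  let θ : ℚˣ × ℚˣ →* Multiplicative (Fin t → ℤ) :=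
    MonoidHom.mk'
      (fun z => Multiplicative.ofAdd (fun j =>
        padicValRat (q j 0) (z.2 : ℚ) - padicValRat (q j 1) (z.1 : ℚ)))
      (by
        intro z w
        rw [← ofAdd_add]
        apply congrArg Multiplicative.ofAdd
        funext j
        haveI := fprime j 0
        haveI := fprime j 1
        simp only [Prod.fst_mul, Prod.snd_mul, Units.val_mul, Pi.add_apply]
        rw [padicValRat.mul (Units.ne_zero _) (Units.ne_zero _),
          padicValRat.mul (Units.ne_zero _) (Units.ne_zero _)]
        ring)
  have hθapp : ∀ z : ℚˣ × ℚˣ, Multiplicative.toAdd (θ z) = fun j =>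
      padicValRat (q j 0) (z.2 : ℚ) - padicValRat (q j 1) (z.1 : ℚ) := fun z => rfl
  -- sigma-index comparison
  have sigma_iff : ∀ (j' j : Fin t) (c : Fin (nf j' + 3)) (i : Fin (nf j + 3)),
      (⟨j', c⟩ : (j : Fin t) × Fin (nf j + 3)) = ⟨j, i⟩ ↔ j' = j ∧ (c : ℕ) = (i : ℕ) := by
    intro j' j c i
    constructor
    · intro h
      obtain ⟨h1, h2⟩ := Sigma.mk.inj_iff.mp h
      subst h1
      rw [heq_iff_eq] at h2
      exact ⟨rfl, by rw [h2]⟩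
    · rintro ⟨rfl, h⟩
      exact congrArg (Sigma.mk j') (Fin.ext h)
  -- valuations of generators
  have hval : ∀ (j' : Fin t) (c : Fin (nf j' + 3)) (j : Fin t) (i : Fin (nf j + 3)),
      padicValRat (q j' c) (u j i : ℚ) = if j' = j ∧ (c : ℕ) = (i : ℕ) then 1 else 0 := by
    intro j' c j i
    rw [hu, padicValRat_prime_prime (hq j' c) (hq j i)]
    congr 1
    rw [eq_iff_iff]
    constructor
    · intro h
      exact (sigma_iff j' j c i).mp (hinj h)
    · intro h
      have := (sigma_iff j' j c i).mpr h
      exact congrArg (fun x : (j : Fin t) × Fin (nf j + 3) => q x.1 x.2) this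
  -- θ kills the wild generators
  have hwg : ∀ (j : Fin t) (i : Fin (nf j + 2 + 2)), θ (wildGens (u j) i) = 1 := by
    intro j i
    have h0 : Multiplicative.toAdd (θ (wildGens (u j) i)) = 0 := by
      rw [hθapp]
      funext j'
      rcases i with ⟨iv, hi⟩
      simp only [wildGens, Pi.zero_apply]
      by_cases h1 : iv < nf j + 2 + 1 <;> by_cases h2 : 0 < iv
      · rw [dif_pos h1, dif_pos h2, hval, hval]
        by_cases hj : j' = j
        · simp only [hj, true_and, Fin.val_zero, Fin.val_one]
          split_ifs <;> omega
        · simp [hj]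
      · rw [dif_pos h1, dif_neg h2, Units.val_one, padicValRat.one, hval]
        by_cases hj : j' = j
        · simp only [hj, true_and, Fin.val_one]
          split_ifs <;> omega
        · simp [hj]
      · rw [dif_neg h1, dif_pos h2, Units.val_one, padicValRat.one, hval]
        by_cases hj : j' = j
        · simp only [hj, true_and, Fin.val_zero]
          split_ifs <;> omega
        · simp [hj]
      · omega
    have := congrArg Multiplicative.ofAdd h0
    simpa using this
  -- the extra generators
  set ext1 : Fin t → ℚˣ × ℚˣ := fun j => ((1 : ℚˣ), (u j 0) ^ (N j)) with hext1def
  set ext2 : Fin t → ℚˣ × ℚˣ := fun j =>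
    ((u j (Fin.last (nf j + 2))) ^ (N' j), (1 : ℚˣ)) with hext2def
  set v : Fin t → Fin t → ℤ := fun j j' => if j' = j then (N j : ℤ) else 0 with hvdef
  have hext1 : ∀ j, θ (ext1 j) = Multiplicative.ofAdd (v j) := by
    intro j
    have h0 : Multiplicative.toAdd (θ (ext1 j)) = v j := by
      rw [hθapp]
      funext j'
      haveI := fprime j' 0
      show padicValRat (q j' 0) (((u j 0 : ℚˣ) ^ N j : ℚˣ) : ℚ)
          - padicValRat (q j' 1) ((1 : ℚˣ) : ℚ) = v j j'
      rw [Units.val_pow_eq_pow_val, Units.val_one, padicValRat.one,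
        padicValRat.pow (q := _), hval]
      simp only [hvdef, Fin.val_zero, and_true, sub_zero]
      by_cases hj : j' = j <;> simp [hj]
    calc θ (ext1 j) = Multiplicative.ofAdd (Multiplicative.toAdd (θ (ext1 j))) := rfl
    _ = Multiplicative.ofAdd (v j) := by rw [h0]
  have hext2 : ∀ j, θ (ext2 j) = 1 := by
    intro j
    have h0 : Multiplicative.toAdd (θ (ext2 j)) = 0 := by
      rw [hθapp]
      funext j'
      haveI := fprime j' 1
      show padicValRat (q j' 0) ((1 : ℚˣ) : ℚ)
          - padicValRat (q j' 1) (((u j (Fin.last (nf j + 2)) : ℚˣ) ^ N' j : ℚˣ) : ℚ)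
          = 0
      rw [Units.val_pow_eq_pow_val, Units.val_one, padicValRat.one,
        padicValRat.pow (q := _), hval]
      have : ¬ (j' = j ∧ ((1 : Fin (nf j' + 3)) : ℕ) = ((Fin.last (nf j + 2)) : ℕ)) := by
        rintro ⟨rfl, h⟩
        simp only [Fin.val_one, Fin.val_last] at h
        omega
      rw [if_neg this]
      ring
    have := congrArg Multiplicative.ofAdd h0
    simpa using this
  -- structural subgroups
  set W : Subgroup (ℚˣ × ℚˣ) :=
    ⨆ j, Subgroup.closure (Set.range (wildGens (u j))) with hWdef
  set K : Subgroup (ℚˣ × ℚˣ) := ⨆ j, Subgroup.zpowers (ext1 j) with hKdef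
  have hΓ : (⨆ j, Λ j) = W ⊔ K := by
    have : ∀ j, Λ j = Subgroup.closure (Set.range (wildGens (u j)))
        ⊔ Subgroup.zpowers (ext1 j) := by
      intro j
      rw [hΛ j, Set.insert_eq, Subgroup.closure_union, ← Subgroup.zpowers_eq_closure,
        sup_comm]
    calc (⨆ j, Λ j) = ⨆ j, (Subgroup.closure (Set.range (wildGens (u j)))
        ⊔ Subgroup.zpowers (ext1 j)) := by
          exact iSup_congr this
    _ = W ⊔ K := iSup_sup_eq
  have hWker : W ≤ θ.ker := by
    apply iSup_le
    intro j
    rw [Subgroup.closure_le]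
    rintro x ⟨i, rfl⟩
    exact hwg j i
  have hΓ'ker : (⨆ j, Λ' j) ≤ θ.ker := by
    apply iSup_le
    intro j
    rw [hΛ' j, Subgroup.closure_le]
    rintro x (rfl | ⟨i, rfl⟩)
    · exact hext2 j
    · exact hwg j i
  have hWle : W ≤ ⨆ j, (Λ j ⊓ Λ' j) := by
    apply iSup_le
    intro j
    refine le_trans (le_inf ?_ ?_) (le_iSup (fun j => Λ j ⊓ Λ' j) j)
    · rw [hΛ j]; exact Subgroup.closure_mono (Set.subset_insert _ _)
    · rw [hΛ' j]; exact Subgroup.closure_mono (Set.subset_insert _ _)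
  have hsuple : (⨆ j, (Λ j ⊓ Λ' j)) ≤ (⨆ j, Λ j) ⊓ (⨆ j, Λ' j) := by
    apply iSup_le
    intro j
    exact le_inf (le_trans inf_le_left (le_iSup Λ j))
      (le_trans inf_le_right (le_iSup Λ' j))
  -- every element of K is a product of powers of the ext1
  have hKform : ∀ z ∈ K, ∃ a : Fin t → ℤ, z = ∏ j, ext1 j ^ a j := by
    intro z hz
    refine Subgroup.iSup_induction (C := fun x => ∃ a : Fin t → ℤ, x = ∏ j, ext1 j ^ a j)
      (fun j => Subgroup.zpowers (ext1 j)) hz ?_ ?_ ?_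
    · intro i x hx
      obtain ⟨k, rfl⟩ := Subgroup.mem_zpowers_iff.mp hx
      refine ⟨Pi.single i k, ?_⟩
      rw [Fintype.prod_eq_single i (fun b hb => by rw [Pi.single_eq_of_ne hb]; exact zpow_zero _)]
      rw [Pi.single_eq_same]
    · exact ⟨0, by simp⟩
    · rintro x y ⟨a, rfl⟩ ⟨b, rfl⟩
      refine ⟨a + b, ?_⟩
      rw [← Finset.prod_mul_distrib]
      apply Finset.prod_congr rfl
      intro j _
      rw [Pi.add_apply, zpow_add]
  have hθprod : ∀ a : Fin t → ℤ,
      θ (∏ j, ext1 j ^ a j) = Multiplicative.ofAdd (fun j' => a j' * (N j' : ℤ)) := by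
    intro a
    rw [map_prod]
    have : ∀ j, θ (ext1 j ^ a j) = Multiplicative.ofAdd (a j • v j) := by
      intro j
      rw [map_zpow, hext1 j, ofAdd_zsmul]
    rw [Finset.prod_congr rfl (fun j _ => this j), ← ofAdd_sum]
    apply congrArg Multiplicative.ofAdd
    funext j'
    rw [Finset.sum_apply]
    rw [Finset.sum_eq_single j']
    · simp [hvdef]
    · intro b _ hb
      simp [hvdef, Ne.symm hb]
    · intro h
      exact absurd (Finset.mem_univ j') h
  -- kernel elements of Γ lie in W
  have hkerW : ∀ z ∈ (⨆ j, Λ j), θ z = 1 → z ∈ W := by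
    intro z hz hθz
    rw [hΓ] at hz
    obtain ⟨w, hw, k, hk, rfl⟩ := Subgroup.mem_sup.mp hz
    obtain ⟨a, rfl⟩ := hKform k hk
    have hwk : θ w = 1 := hWker hw
    have : θ (∏ j, ext1 j ^ a j) = 1 := by
      have := hθz
      rw [map_mul, hwk, one_mul] at this
      exact this
    rw [hθprod] at this
    have ha : ∀ j, a j = 0 := by
      intro j
      have h0 : (fun j' => a j' * (N j' : ℤ)) = (0 : Fin t → ℤ) := by
        have := congrArg Multiplicative.toAdd this
        simpa using this
      have := congrFun h0 j
      simp only [Pi.zero_apply, mul_eq_zero] at this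
      rcases this with h | h
      · exact h
      · exact absurd h (by have := hN j; omega)
    have : (∏ j, ext1 j ^ a j) = 1 := by
      rw [Finset.prod_congr rfl (fun j _ => by rw [ha j, zpow_zero])]
      exact Finset.prod_const_one
    rw [this, mul_one]
    exact hw
  -- first statement
  have hmain : (⨆ j, Λ j) ⊓ (⨆ j, Λ' j) = ⨆ j, (Λ j ⊓ Λ' j) := by
    refine le_antisymm ?_ hsuple
    rintro z ⟨hz1, hz2⟩
    exact hWle (hkerW z hz1 (hΓ'ker hz2))
  refine ⟨hmain, ?_⟩
  -- rank statement
  set Γ : Subgroup (ℚˣ × ℚˣ) := ⨆ j, Λ j with hΓdef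
  set φ : ↥Γ →* Multiplicative (Fin t → ℤ) := θ.comp Γ.subtype with hφdef
  have hker : φ.ker = (((⨆ j, Λ j) ⊓ (⨆ j, Λ' j)).subgroupOf (⨆ j, Λ j)) := by
    ext z
    rw [MonoidHom.mem_ker, Subgroup.mem_subgroupOf]
    constructor
    · intro h
      have hzW : (z : ℚˣ × ℚˣ) ∈ W := hkerW z z.2 h
      exact le_of_eq hmain.symm (hWle hzW)
    · intro h
      exact hΓ'ker h.2
  have hrange : φ.range = ⨆ j, Subgroup.zpowers (Multiplicative.ofAdd (v j)) := by
    rw [hφdef, MonoidHom.range_comp, Subgroup.range_subtype]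
    have : Subgroup.map θ Γ = Subgroup.map θ W ⊔ Subgroup.map θ K := by
      rw [hΓ, Subgroup.map_sup]
    rw [this, (Subgroup.map_eq_bot_iff W).mpr hWker, bot_sup_eq, hKdef,
      Subgroup.map_iSup]
    exact iSup_congr fun j => by rw [MonoidHom.map_zpowers, hext1 j]
  -- the additive target submodule
  set S : Submodule ℤ (Fin t → ℤ) := Submodule.span ℤ (Set.range v) with hSdef
  have hmemiff : ∀ x : Multiplicative (Fin t → ℤ),
      x ∈ (⨆ j, Subgroup.zpowers (Multiplicative.ofAdd (v j))) ↔
        Multiplicative.toAdd x ∈ S := by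
    intro x
    constructor
    · intro hx
      refine Subgroup.iSup_induction (C := fun y => Multiplicative.toAdd y ∈ S)
        (fun j => Subgroup.zpowers (Multiplicative.ofAdd (v j))) hx ?_ ?_ ?_
      · intro i y hy
        obtain ⟨k, rfl⟩ := Subgroup.mem_zpowers_iff.mp hy
        have : Multiplicative.toAdd ((Multiplicative.ofAdd (v i)) ^ k) = k • v i := rfl
        rw [this]
        exact Submodule.smul_mem _ _ (Submodule.subset_span ⟨i, rfl⟩)
      · simpa using (Submodule.zero_mem S)
      · intro y z hy hz
        rw [toAdd_mul]
        exact Submodule.add_mem _ hy hz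
    · intro hx
      have : ∀ (y : Fin t → ℤ), y ∈ S →
          Multiplicative.ofAdd y ∈ (⨆ j, Subgroup.zpowers (Multiplicative.ofAdd (v j))) := by
        intro y hy
        refine Submodule.span_induction ?_ ?_ ?_ ?_ hy
        · rintro _ ⟨j, rfl⟩
          exact le_iSup (fun j => Subgroup.zpowers (Multiplicative.ofAdd (v j))) j
            (Subgroup.mem_zpowers _)
        · simpa using Subgroup.one_mem _
        · intro a b _ _ ha hb
          rw [ofAdd_add]
          exact Subgroup.mul_mem _ ha hb
        · intro c a _ ha
          rw [ofAdd_zsmul]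
          exact Subgroup.zpow_mem _ ha c
      have h2 := this _ hx
      simpa using h2
  -- linear independence and rank of S
  have hvinj : LinearIndependent ℤ v := by
    rw [Fintype.linearIndependent_iff]
    intro g hg j
    have := congrFun hg j
    rw [Finset.sum_apply] at this
    simp only [Pi.smul_apply] at this
    have hsum : ∑ i, g i • v i j = g j * (N j : ℤ) := by
      rw [Finset.sum_eq_single j]
      · simp [hvdef]
      · intro b _ hb
        simp [hvdef, Ne.symm hb]
      · intro h; exact absurd (Finset.mem_univ j) h
    rw [hsum] at this
    simp only [Pi.zero_apply] at this
    rcases mul_eq_zero.mp this with h | h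
    · exact h
    · exact absurd h (by have := hN j; omega)
  have hrankS : Module.rank ℤ ↥S = (t : Cardinal) := by
    rw [hSdef, rank_span hvinj, Cardinal.mk_range_eq v hvinj.injective, Cardinal.mk_fin]
  -- assemble
  rw [← hker]
  let e1 : (↥Γ ⧸ φ.ker) ≃* ↥φ.range := QuotientGroup.quotientKerEquivRange φ
  let e2 : ↥φ.range ≃* ↥(⨆ j, Subgroup.zpowers (Multiplicative.ofAdd (v j))) :=
    MulEquiv.subgroupCongr hrange
  let E : Additive ↥(⨆ j, Subgroup.zpowers (Multiplicative.ofAdd (v j))) ≃+ ↥S :=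
    { toFun := fun a => ⟨Multiplicative.toAdd ((Additive.toMul a : _) : Multiplicative (Fin t → ℤ)),
        (hmemiff _).mp (Additive.toMul a).2⟩
      invFun := fun s => Additive.ofMul ⟨Multiplicative.ofAdd (s : Fin t → ℤ),
        (hmemiff _).mpr (by simpa using s.2)⟩
      left_inv := fun a => rfl
      right_inv := fun s => rfl
      map_add' := fun a b => rfl }
  let e : Additive (↥Γ ⧸ φ.ker) ≃+ ↥S :=
    (MulEquiv.toAdditive (e1.trans e2)).trans E
  rw [LinearEquiv.rank_eq e.toIntLinearEquiv]
  exact hrankS
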